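/- Let P_n(x;a,b) = x * prod_{i=1}^{n-1} (x + i*a + (n-i)*b) for n >= 1 and P_0 = 1, polynomials in Z[x,a,b]. Then the sequence (P_n) is of binomial type: P_n(x+y; a, b) = sum_{k=0}^n binomial(n,k) P_k(x;a,b) P_{n-k}(y;a,b) in Z[x,y,a,b]. -/

import Mathlib

open MvPolynomial

/-- The Schläfli–Gessel–Seo polynomials
`P_n(x;a,b) = x ∏_{i=1}^{n-1} (x + i·a + (n-i)·b)` for `n ≥ 1`, `P_0 = 1`,
evaluated at elements `x, a, b` of a commutative ring. -/
def sgsPoly {R : Type*} [CommRing R] (n : ℕ) (x a b : R) : R :=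
  if n = 0 then 1
  else x * ∏ i ∈ Finset.Icc 1 (n - 1), (x + (i : R) * a + ((n - i : ℕ) : R) * b)

lemma sgsPoly_zero {R : Type*} [CommRing R] (x a b : R) : sgsPoly 0 x a b = 1 := rfl

lemma sgsPoly_of_ne {R : Type*} [CommRing R] {n : ℕ} (hn : n ≠ 0) (x a b : R) :
    sgsPoly n x a b
      = x * ∏ i ∈ Finset.Icc 1 (n - 1), (x + (i : R) * a + ((n - i : ℕ) : R) * b) :=
  if_neg hn

lemma sgsPoly_zero_left {R : Type*} [CommRing R] {n : ℕ} (hn : n ≠ 0) (a b : R) :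
    sgsPoly n 0 a b = 0 := by rw [sgsPoly_of_ne hn, zero_mul]

lemma map_sgsPoly {R T : Type*} [CommRing R] [CommRing T] (f : R →+* T) (n : ℕ) (x a b : R) :
    f (sgsPoly n x a b) = sgsPoly n (f x) (f a) (f b) := by
  unfold sgsPoly
  split
  · simp
  · rw [map_mul, map_prod]
    refine congrArg _ (Finset.prod_congr rfl fun i _ => ?_)
    simp [map_add, map_mul, map_natCast]

lemma prod_shift {R : Type*} [CommRing R] (s t : ℕ) (c : ℕ → R) :
    ∏ j ∈ Finset.Icc (s+1) (t+1), c j = ∏ i ∈ Finset.Icc s t, c (i+1) := by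
  rw [← Finset.map_add_right_Icc s t 1, Finset.prod_map]
  rfl

/-- The key shift recurrence:
`P_{n+1}(x+a) - P_{n+1}(x+b) = (n+1)(a-b) P_n(x+a+b)`. -/
lemma sgs_shift {R : Type*} [CommRing R] (n : ℕ) (x a b : R) :
    sgsPoly (n+1) (x+a) a b - sgsPoly (n+1) (x+b) a b
      = ((n+1 : ℕ) : R) * (a - b) * sgsPoly n (x+a+b) a b := by
  rcases n with _ | m
  · simp [sgsPoly]
  · set c : ℕ → R := fun j => x + (j : R) * a + ((m + 3 - j : ℕ) : R) * b with hc
    have h1 : sgsPoly (m+2) (x+a) a b = (x+a) * ∏ j ∈ Finset.Icc 2 (m+2), c j := by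
      rw [sgsPoly_of_ne (by omega)]
      congr 1
      rw [show (2:ℕ) = 1+1 from rfl, show m+2 = (m+1)+1 from rfl, prod_shift]
      refine Finset.prod_congr (by norm_num) fun i hi => ?_
      simp only [hc]
      have h : m + 3 - (i+1) = m + 2 - i := by omega
      rw [h]
      push_cast
      ring
    have h2 : sgsPoly (m+2) (x+b) a b = (x+b) * ∏ j ∈ Finset.Icc 1 (m+1), c j := by
      rw [sgsPoly_of_ne (by omega)]
      congr 1
      refine Finset.prod_congr (by norm_num) fun i hi => ?_
      simp only [hc]
      simp only [Finset.mem_Icc] at hi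
      have h : m + 3 - i = (m + 2 - i) + 1 := by omega
      rw [h]
      push_cast
      ring
    have h3 : sgsPoly (m+1) (x+a+b) a b = (x+a+b) * ∏ j ∈ Finset.Icc 2 (m+1), c j := by
      rw [sgsPoly_of_ne (by omega)]
      congr 1
      rw [show (2:ℕ) = 1+1 from rfl, prod_shift]
      refine Finset.prod_congr (by norm_num) fun i hi => ?_
      simp only [hc]
      simp only [Finset.mem_Icc] at hi
      have h : m + 3 - (i+1) = (m + 1 - i) + 1 := by omega
      rw [h]
      push_cast
      ring
    have d1 : Finset.Icc 2 (m+2) = insert (m+2) (Finset.Icc 2 (m+1)) := by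
      ext z; simp only [Finset.mem_Icc, Finset.mem_insert]; omega
    have d2 : Finset.Icc 1 (m+1) = insert 1 (Finset.Icc 2 (m+1)) := by
      ext z; simp only [Finset.mem_Icc, Finset.mem_insert]; omega
    rw [h1, h2, h3, d1, d2, Finset.prod_insert (by simp), Finset.prod_insert (by simp)]
    have e1 : c (m+2) = x + ((m+2 : ℕ) : R) * a + b := by
      simp only [hc]
      have h : m + 3 - (m+2) = 1 := by omega
      rw [h]; push_cast; ring
    have e2 : c 1 = x + a + ((m+2 : ℕ) : R) * b := by
      simp only [hc]
      have h : m + 3 - 1 = m + 2 := by omega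
      rw [h]; push_cast; ring
    rw [e1, e2]
    push_cast
    ring

/-- Convolution step used in the induction. -/
lemma key_step {R : Type*} [CommRing R] (m : ℕ) (x y a b : R)
    (IH : ∀ u v : R, sgsPoly m (u + v) a b
        = ∑ k ∈ Finset.range (m + 1), (Nat.choose m k : R) * sgsPoly k u a b * sgsPoly (m - k) v a b) :
    sgsPoly (m+1) ((x + a) + y) a b
        - ∑ k ∈ Finset.range (m+2),
            (Nat.choose (m+1) k : R) * sgsPoly k (x + a) a b * sgsPoly (m+1-k) y a b
      = sgsPoly (m+1) ((x + b) + y) a b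
        - ∑ k ∈ Finset.range (m+2),
            (Nat.choose (m+1) k : R) * sgsPoly k (x + b) a b * sgsPoly (m+1-k) y a b := by
  rw [sub_eq_sub_iff_sub_eq_sub]
  rw [show (x + a) + y = (x + y) + a from by ring, show (x + b) + y = (x + y) + b from by ring,
    sgs_shift m (x + y) a b, ← Finset.sum_sub_distrib]
  have h1 : ∑ k ∈ Finset.range (m+2),
        ((Nat.choose (m+1) k : R) * sgsPoly k (x + a) a b * sgsPoly (m+1-k) y a b
          - (Nat.choose (m+1) k : R) * sgsPoly k (x + b) a b * sgsPoly (m+1-k) y a b)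
      = ∑ k ∈ Finset.range (m+2),
        (Nat.choose (m+1) k : R) * (sgsPoly k (x + a) a b - sgsPoly k (x + b) a b)
          * sgsPoly (m+1-k) y a b :=
    Finset.sum_congr rfl fun k _ => by ring
  rw [h1, Finset.sum_range_succ']
  have h2 : (Nat.choose (m+1) 0 : R) * (sgsPoly 0 (x + a) a b - sgsPoly 0 (x + b) a b)
      * sgsPoly (m+1-0) y a b = 0 := by
    rw [sgsPoly_zero, sgsPoly_zero]; ring
  rw [h2, add_zero]
  have h3 : ∀ j ∈ Finset.range (m+1),
      (Nat.choose (m+1) (j+1) : R) * (sgsPoly (j+1) (x + a) a b - sgsPoly (j+1) (x + b) a b)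
          * sgsPoly (m+1-(j+1)) y a b
        = ((m+1 : ℕ) : R) * (a - b)
            * ((Nat.choose m j : R) * sgsPoly j (x + a + b) a b * sgsPoly (m - j) y a b) := by
    intro j _
    rw [sgs_shift j x a b, show m+1-(j+1) = m - j from by omega]
    have hnat0 : (m+1).choose (j+1) * (j+1) = (m+1) * m.choose j := (Nat.add_one_mul_choose_eq m j).symm
    have hnat : ((Nat.choose (m+1) (j+1) : ℕ) : R) * (((j+1 : ℕ)) : R)
        = ((m+1 : ℕ) : R) * ((Nat.choose m j : ℕ) : R) := by
      exact_mod_cast congrArg (fun t : ℕ => (t : R)) hnat0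
    linear_combination sgsPoly j (x + a + b) a b * sgsPoly (m - j) y a b * (a - b) * hnat
  rw [Finset.sum_congr rfl h3, ← Finset.mul_sum, ← IH (x + a + b) y,
    show x + a + b + y = (x + y) + a + b from by ring]

/-- The Rothe–Pfaff–Schläfli identity over an arbitrary commutative ring. -/
theorem sgs_binomial_gen : ∀ (n : ℕ) {R : Type} [CommRing R] (x y a b : R),
    sgsPoly n (x + y) a b
      = ∑ k ∈ Finset.range (n + 1),
          (Nat.choose n k : R) * sgsPoly k x a b * sgsPoly (n - k) y a b := by
  intro n
  induction n with
  | zero => intro R _ x y a b; simp [sgsPoly]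
  | succ m IH =>
    intro R _ x y a b
    have huniv :
        sgsPoly (m+1) (Polynomial.X + Polynomial.C (X 0) :
              Polynomial (MvPolynomial (Fin 3) ℤ)) (Polynomial.C (X 1)) (Polynomial.C (X 2))
          = ∑ k ∈ Finset.range (m+2),
              ((m+1).choose k : Polynomial (MvPolynomial (Fin 3) ℤ))
                * sgsPoly (R := Polynomial (MvPolynomial (Fin 3) ℤ)) k Polynomial.X (Polynomial.C (X 1)) (Polynomial.C (X 2))
                * sgsPoly (R := Polynomial (MvPolynomial (Fin 3) ℤ)) (m+1-k) (Polynomial.C (X 0)) (Polynomial.C (X 1)) (Polynomial.C (X 2)) := by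
      rw [← sub_eq_zero]
      set G : Polynomial (MvPolynomial (Fin 3) ℤ) :=
        sgsPoly (R := Polynomial (MvPolynomial (Fin 3) ℤ)) (m+1) (Polynomial.X + Polynomial.C (X 0)) (Polynomial.C (X 1)) (Polynomial.C (X 2))
          - ∑ k ∈ Finset.range (m+2),
              ((m+1).choose k : Polynomial (MvPolynomial (Fin 3) ℤ))
                * sgsPoly (R := Polynomial (MvPolynomial (Fin 3) ℤ)) k Polynomial.X (Polynomial.C (X 1)) (Polynomial.C (X 2))
                * sgsPoly (R := Polynomial (MvPolynomial (Fin 3) ℤ)) (m+1-k) (Polynomial.C (X 0)) (Polynomial.C (X 1)) (Polynomial.C (X 2))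
        with hG
      have hcomp : ∀ q : Polynomial (MvPolynomial (Fin 3) ℤ),
          G.comp q
            = sgsPoly (R := Polynomial (MvPolynomial (Fin 3) ℤ)) (m+1) (q + Polynomial.C (X 0)) (Polynomial.C (X 1)) (Polynomial.C (X 2))
              - ∑ k ∈ Finset.range (m+2),
                  ((m+1).choose k : Polynomial (MvPolynomial (Fin 3) ℤ))
                    * sgsPoly k q (Polynomial.C (X 1)) (Polynomial.C (X 2))
                    * sgsPoly (R := Polynomial (MvPolynomial (Fin 3) ℤ)) (m+1-k) (Polynomial.C (X 0)) (Polynomial.C (X 1)) (Polynomial.C (X 2)) := by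
        intro q
        rw [hG]
        show (Polynomial.eval₂RingHom Polynomial.C q) _ = _
        simp only [map_sub, map_sum, map_mul, map_natCast, map_sgsPoly, map_add,
          Polynomial.coe_eval₂RingHom, Polynomial.eval₂_X, Polynomial.eval₂_C]
      have h1 : G.comp (Polynomial.X + Polynomial.C (X 1))
          = G.comp (Polynomial.X + Polynomial.C (X 2)) := by
        rw [hcomp, hcomp]
        exact key_step m Polynomial.X (Polynomial.C (X 0)) (Polynomial.C (X 1)) (Polynomial.C (X 2))
          (fun u v => IH u v (Polynomial.C (X 1)) (Polynomial.C (X 2)))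
      have heval : ∀ p : MvPolynomial (Fin 3) ℤ,
          Polynomial.eval (p + X 1) G = Polynomial.eval (p + X 2) G := by
        intro p
        have h2 := congrArg (Polynomial.eval p) h1
        rw [Polynomial.eval_comp, Polynomial.eval_comp] at h2
        simpa using h2
      have hstep : ∀ p : MvPolynomial (Fin 3) ℤ,
          Polynomial.eval (p + (X 1 - X 2)) G = Polynomial.eval p G := by
        intro p
        have h2 := heval (p - X 2)
        rw [show p - X 2 + X 1 = p + (X 1 - X 2) from by ring,
          show p - X 2 + X 2 = p from by ring] at h2
        exact h2
      have h0 : Polynomial.eval 0 G = 0 := by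
        rw [hG]
        show (Polynomial.evalRingHom 0) _ = 0
        simp only [map_sub, map_sum, map_mul, map_natCast, map_sgsPoly, map_add,
          Polynomial.coe_evalRingHom, Polynomial.eval_X, Polynomial.eval_C]
        rw [zero_add, sub_eq_zero]
        rw [Finset.sum_eq_single 0]
        · simp [sgsPoly_zero]
        · intro k _ hk0
          rw [sgsPoly_zero_left hk0]
          ring
        · intro h
          simp at h
      have hiter : ∀ k : ℕ,
          Polynomial.eval (k • ((X 1 : MvPolynomial (Fin 3) ℤ) - X 2)) G = 0 := by
        intro k
        induction k with
        | zero => simpa using h0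
        | succ j ihj =>
          rw [succ_nsmul]
          rw [show j • ((X 1 : MvPolynomial (Fin 3) ℤ) - X 2) + (X 1 - X 2)
              = j • ((X 1 : MvPolynomial (Fin 3) ℤ) - X 2) + ((X 1 : MvPolynomial (Fin 3) ℤ) - X 2) from rfl]
          rw [hstep]
          exact ihj
      have hcne : (X 1 : MvPolynomial (Fin 3) ℤ) - X 2 ≠ 0 := by
        rw [sub_ne_zero]
        intro h
        have h' := congrArg (MvPolynomial.eval (fun i : Fin 3 => if i = 1 then (1:ℤ) else 0)) h
        simp at h'
      have hinj : Function.Injective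
          (fun k : ℕ => k • ((X 1 : MvPolynomial (Fin 3) ℤ) - X 2)) := by
        intro k l h
        simp only [nsmul_eq_mul] at h
        have h' := mul_right_cancel₀ hcne h
        exact_mod_cast h'
      exact Polynomial.eq_zero_of_infinite_isRoot G
        (Set.infinite_of_injective_forall_mem hinj (fun k => hiter k))
    have htrans := congrArg
      (Polynomial.eval₂RingHom (MvPolynomial.eval₂Hom (Int.castRingHom R) ![y, a, b]) x) huniv
    simpa only [map_sub, map_sum, map_mul, map_natCast, map_sgsPoly, map_add,
      Polynomial.coe_eval₂RingHom, Polynomial.eval₂_X, Polynomial.eval₂_C,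
      coe_eval₂Hom, eval₂_X, Matrix.cons_val_zero, Matrix.cons_val_one, Matrix.head_cons,
      Matrix.cons_val_two, Matrix.tail_cons] using htrans

/-- The Rothe–Pfaff–Schläfli identity: the Schläfli–Gessel–Seo polynomials form
a sequence of binomial type, i.e. in `ℤ[x,y,a,b]` (with `x = X 0`, `y = X 1`,
`a = X 2`, `b = X 3`),
`P_n(x+y;a,b) = ∑_{k=0}^n binomial(n,k) P_k(x;a,b) P_{n-k}(y;a,b)`. -/
theorem sgs_binomial_type (n : ℕ) :
    sgsPoly n ((X 0 : MvPolynomial (Fin 4) ℤ) + X 1) (X 2) (X 3)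
      = ∑ k ∈ Finset.range (n + 1),
          (Nat.choose n k : MvPolynomial (Fin 4) ℤ)
            * sgsPoly k (X 0) (X 2) (X 3) * sgsPoly (n - k) (X 1) (X 2) (X 3) := by
  exact sgs_binomial_gen n (X 0) (X 1) (X 2) (X 3)
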